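/- Define ϱ^1(t,x) := t/(|x| + t^{1/α})^{d+α}. There is a constant C > 0 depending only on d and α such that for all 0 < s < t and x, y, z ∈ ℝ^d with x ≠ y: ϱ^1(t-s, x-z) · ϱ^1(s, z-y) / ϱ^1(t, x-y) ≤ C · ((t-s)s/t) · ( ϱ^0(t-s, x-z) + ϱ^0(s, z-y) ), where ϱ^0(u,w) := 1/(|w| + u^{1/α})^{d+α}. -/

import Mathlib

open Real

lemma rpow_add_le' (u v r : ℝ) (hu : 0 ≤ u) (hv : 0 ≤ v) (hr : 0 ≤ r) :
    (u + v) ^ r ≤ 2 ^ r * (u ^ r + v ^ r) := by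
  have h1 : u + v ≤ 2 * max u v := by
    rcases le_total u v with h | h
    · rw [max_eq_right h]; linarith
    · rw [max_eq_left h]; linarith
  have hmax : (0:ℝ) ≤ max u v := le_max_of_le_left hu
  calc (u + v) ^ r ≤ (2 * max u v) ^ r :=
        Real.rpow_le_rpow (by linarith) h1 hr
    _ = 2 ^ r * (max u v) ^ r := Real.mul_rpow (by norm_num) hmax
    _ ≤ 2 ^ r * (u ^ r + v ^ r) := by
        apply mul_le_mul_of_nonneg_left _ (Real.rpow_nonneg (by norm_num) r)
        rcases le_total u v with h | h
        · rw [max_eq_right h]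
          have := Real.rpow_nonneg hu r; linarith
        · rw [max_eq_left h]
          have := Real.rpow_nonneg hv r; linarith

theorem stmt_2 (d : ℕ) (hd : 1 ≤ d) (α : ℝ) (hα : 0 < α ∧ α < 2) :
    ∃ C > 0, ∀ (s t : ℝ), 0 < s → s < t →
      ∀ x y z : EuclideanSpace ℝ (Fin d), x ≠ y →
        ((t - s) / (‖x - z‖ + (t - s) ^ (1/α)) ^ ((d:ℝ) + α))
          * (s / (‖z - y‖ + s ^ (1/α)) ^ ((d:ℝ) + α))
          / (t / (‖x - y‖ + t ^ (1/α)) ^ ((d:ℝ) + α))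
        ≤ C * ((t - s) * s / t) *
            (1 / (‖x - z‖ + (t - s) ^ (1/α)) ^ ((d:ℝ) + α)
              + 1 / (‖z - y‖ + s ^ (1/α)) ^ ((d:ℝ) + α)) := by
  obtain ⟨hα0, hα2⟩ := hα
  have hp0 : (0:ℝ) < (d:ℝ) + α := by positivity
  have hr0 : (0:ℝ) < 1/α := by positivity
  refine ⟨2 ^ ((1/α) * ((d:ℝ) + α)) * 2 ^ ((d:ℝ) + α), by positivity, ?_⟩
  intro s t hs hst x y z hxy
  set p : ℝ := (d:ℝ) + α with hp
  set r : ℝ := 1/α with hrr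
  have hts : 0 < t - s := by linarith
  have ht : 0 < t := by linarith
  set A : ℝ := ‖x - z‖ + (t - s) ^ r with hA
  set B : ℝ := ‖z - y‖ + s ^ r with hB
  set D : ℝ := ‖x - y‖ + t ^ r with hD
  have hA0 : 0 < A := add_pos_of_nonneg_of_pos (norm_nonneg _) (Real.rpow_pos_of_pos hts r)
  have hB0 : 0 < B := add_pos_of_nonneg_of_pos (norm_nonneg _) (Real.rpow_pos_of_pos hs r)
  have hD0 : 0 < D := add_pos_of_nonneg_of_pos (norm_nonneg _) (Real.rpow_pos_of_pos ht r)
  have hAp : 0 < A ^ p := Real.rpow_pos_of_pos hA0 p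
  have hBp : 0 < B ^ p := Real.rpow_pos_of_pos hB0 p
  have hDp : 0 < D ^ p := Real.rpow_pos_of_pos hD0 p
  have h2r : (1:ℝ) ≤ 2 ^ r := Real.one_le_rpow (by norm_num) hr0.le
  -- triangle inequality
  have htri : ‖x - y‖ ≤ ‖x - z‖ + ‖z - y‖ := by
    have := norm_add_le (x - z) (z - y)
    rwa [sub_add_sub_cancel] at this
  -- time bound
  have htt : t ^ r ≤ 2 ^ r * ((t - s) ^ r + s ^ r) := by
    have := rpow_add_le' (t - s) s r hts.le hs.le hr0.le
    rwa [sub_add_cancel] at this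
  have hDAB : D ≤ 2 ^ r * (A + B) := by
    have h1 : ‖x - z‖ + ‖z - y‖ ≤ 2 ^ r * (‖x - z‖ + ‖z - y‖) := by
      nlinarith [norm_nonneg (x - z), norm_nonneg (z - y)]
    have : D ≤ ‖x - z‖ + ‖z - y‖ + 2 ^ r * ((t - s) ^ r + s ^ r) := by
      rw [hD]; linarith
    calc D ≤ ‖x - z‖ + ‖z - y‖ + 2 ^ r * ((t - s) ^ r + s ^ r) := this
      _ ≤ 2 ^ r * (‖x - z‖ + ‖z - y‖) + 2 ^ r * ((t - s) ^ r + s ^ r) := by linarith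
      _ = 2 ^ r * (A + B) := by rw [hA, hB]; ring
  have key : D ^ p ≤ 2 ^ (r * p) * 2 ^ p * (A ^ p + B ^ p) := by
    calc D ^ p ≤ (2 ^ r * (A + B)) ^ p :=
          Real.rpow_le_rpow hD0.le hDAB hp0.le
      _ = (2 ^ r) ^ p * (A + B) ^ p :=
          Real.mul_rpow (Real.rpow_nonneg (by norm_num) r) (by positivity)
      _ = 2 ^ (r * p) * (A + B) ^ p := by
          rw [← Real.rpow_mul (by norm_num : (0:ℝ) ≤ 2)]
      _ ≤ 2 ^ (r * p) * (2 ^ p * (A ^ p + B ^ p)) := by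
          apply mul_le_mul_of_nonneg_left (rpow_add_le' A B p hA0.le hB0.le hp0.le)
            (Real.rpow_nonneg (by norm_num) _)
      _ = 2 ^ (r * p) * 2 ^ p * (A ^ p + B ^ p) := by ring
  have e1 : (t - s) / A ^ p * (s / B ^ p) / (t / D ^ p)
      = (t - s) * s / t * (D ^ p / (A ^ p * B ^ p)) := by
    field_simp
  have e2 : 2 ^ (r * p) * 2 ^ p * ((t - s) * s / t) * (1 / A ^ p + 1 / B ^ p)
      = (t - s) * s / t * ((2 ^ (r * p) * 2 ^ p * (A ^ p + B ^ p)) / (A ^ p * B ^ p)) := by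
    field_simp
    ring
  rw [e1, e2]
  gcongr
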